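/- For every n ≥ 1, the number of planar binary trees with n leaves whose internal nodes are labeled by elements of the two-element set {≺, ≻}, subject to the restrictions that (i) the only allowed left-growth pattern is (≻, ≻) — i.e., whenever the left child w of an internal node v is itself an internal node, both v and w are labeled ≻ — and (ii) there is no internal node v whose left child w is internal and whose left child's left child is also internal (no two consecutive left-growth steps), equals the n-th Catalan number C_n = (1/(n+1))·binom(2n, n). (These labeled trees are the normal monomials for the Chen–Wang Gröbner–Shirshov basis of the nonsymmetric dendriform operad with respect to the order of operations ≻ < ≺.) -/

import Mathlib

/-- Operation labels `≺` (prec) and `≻` (succ). -/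
inductive DendOp where
  | prec
  | succ
deriving DecidableEq

/-- Planar (full) binary trees with internal nodes labeled by `L` and unlabeled leaves. -/
inductive PBTree (L : Type) where
  | leaf : PBTree L
  | node : L → PBTree L → PBTree L → PBTree L

/-- Number of leaves of a planar binary tree. -/
def PBTree.leaves {L : Type} : PBTree L → ℕ
  | .leaf => 1
  | .node _ l r => l.leaves + r.leaves

/-- `t` is a leaf. -/
def PBTree.isLeaf {L : Type} : PBTree L → Prop
  | .leaf => True
  | .node _ _ _ => False

/-- Chen–Wang normality: the only allowed left-growth pattern is `(≻, ≻)`, and there are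
no two consecutive left-growth steps (no internal node whose left child is internal and
whose left child's left child is also internal). -/
def PBTree.normalCW : PBTree DendOp → Prop
  | .leaf => True
  | .node _ .leaf r => r.normalCW
  | .node op (.node q a b) r =>
      op = DendOp.succ ∧ q = DendOp.succ ∧ a.isLeaf ∧
        (PBTree.node q a b).normalCW ∧ r.normalCW

/-- Encode a normal tree as an unlabeled binary tree. -/
def PBTree.toTree : PBTree DendOp → Tree Unit
  | .leaf => .node () .nil .nil
  | .node .prec _ r => .node () .nil (toTree r)
  | .node .succ .leaf r => .node () (toTree r) .nil
  | .node .succ (.node _ _ b) r => .node () (toTree b) (toTree r)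

/-- Decode an unlabeled binary tree into a normal tree. -/
def PBTree.ofTree : Tree Unit → PBTree DendOp
  | .nil => .leaf
  | .node _ .nil .nil => .leaf
  | .node _ .nil (.node x a b) => .node .prec .leaf (ofTree (.node x a b))
  | .node _ (.node x a b) .nil => .node .succ .leaf (ofTree (.node x a b))
  | .node _ (.node x a b) (.node y c d) =>
      .node .succ (.node .succ .leaf (ofTree (.node x a b))) (ofTree (.node y c d))

lemma PBTree.toTree_ne_nil : ∀ t : PBTree DendOp, t.toTree ≠ .nil
  | .leaf => by simp [toTree]
  | .node .prec _ r => by simp [toTree]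
  | .node .succ .leaf r => by simp [toTree]
  | .node .succ (.node _ _ b) r => by simp [toTree]

lemma PBTree.ofTree_toTree : ∀ t : PBTree DendOp, t.normalCW → ofTree t.toTree = t
  | .leaf, _ => by simp [toTree, ofTree]
  | .node .prec .leaf r, h => by
      have hr : r.normalCW := h
      rw [toTree]
      rcases hn : r.toTree with _ | ⟨x, a, b⟩
      · exact absurd hn (toTree_ne_nil r)
      · rw [ofTree, Tree.node, ← hn, ofTree_toTree r hr]
  | .node .prec (.node q a b) r, h => by
      exact absurd h.1 (by simp)
  | .node .succ .leaf r, h => by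
      have hr : r.normalCW := h
      rw [toTree]
      rcases hn : r.toTree with _ | ⟨x, a, b⟩
      · exact absurd hn (toTree_ne_nil r)
      · rw [ofTree, Tree.node, ← hn, ofTree_toTree r hr]
  | .node .succ (.node q a b) r, h => by
      obtain ⟨-, hq, ha, hl, hr⟩ := h
      rcases a with _ | ⟨_, _, _⟩
      · have hb : b.normalCW := hl
        rw [toTree]
        rcases hn : b.toTree with _ | ⟨x, u, v⟩
        · exact absurd hn (toTree_ne_nil b)
        rcases hm : r.toTree with _ | ⟨y, c, d⟩
        · exact absurd hm (toTree_ne_nil r)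
        rw [ofTree, Tree.node, Tree.node, ← hn, ← hm, ofTree_toTree b hb, ofTree_toTree r hr, hq]
      · exact absurd ha (by simp [isLeaf])
  termination_by t => sizeOf t

lemma PBTree.ofTree_spec : ∀ u : Tree Unit, u ≠ .nil →
    (ofTree u).normalCW ∧ (ofTree u).toTree = u ∧ (ofTree u).leaves = u.numNodes
  | .nil, h => absurd rfl h
  | .node _ .nil .nil, _ => by simp [ofTree, toTree, normalCW, leaves, Tree.numNodes]
  | .node _ .nil (.node y c d), _ => by
      obtain ⟨h1, h2, h3⟩ := ofTree_spec (.node y c d) (by simp)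
      refine ⟨?_, ?_, ?_⟩
      · exact h1
      · rw [ofTree, toTree, h2]
      · simp [ofTree, leaves, Tree.numNodes, h3]; omega
  | .node _ (.node x a b) .nil, _ => by
      obtain ⟨h1, h2, h3⟩ := ofTree_spec (.node x a b) (by simp)
      refine ⟨?_, ?_, ?_⟩
      · exact h1
      · rw [ofTree, toTree, h2]
      · simp [ofTree, leaves, Tree.numNodes, h3]; omega
  | .node _ (.node x a b) (.node y c d), _ => by
      obtain ⟨h1, h2, h3⟩ := ofTree_spec (.node x a b) (by simp)
      obtain ⟨k1, k2, k3⟩ := ofTree_spec (.node y c d) (by simp)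
      refine ⟨?_, ?_, ?_⟩
      · exact ⟨rfl, rfl, trivial, h1, k1⟩
      · rw [ofTree, toTree, h2, k2]
      · simp [ofTree, leaves, Tree.numNodes, h3, k3]; omega
  termination_by u => sizeOf u

lemma PBTree.numNodes_toTree : ∀ t : PBTree DendOp, t.normalCW → t.toTree.numNodes = t.leaves := by
  intro t ht
  have := ofTree_spec t.toTree (toTree_ne_nil t)
  rw [ofTree_toTree t ht] at this
  exact this.2.2.symm

/-- the number of `{≺,≻}`-labeled planar binary trees with `n` leaves whose
only left-growth pattern is `(≻,≻)` and with no two consecutive left-growth steps equals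
the `n`-th Catalan number `C n = binom(2n, n)/(n+1)`. -/
theorem count_chen_wang_normal_trees (n : ℕ) (hn : 1 ≤ n) :
    {t : PBTree DendOp | t.leaves = n ∧ t.normalCW}.ncard =
      (2 * n).choose n / (n + 1) := by
  have himg : PBTree.toTree '' {t : PBTree DendOp | t.leaves = n ∧ t.normalCW} =
      ↑(Tree.treesOfNumNodesEq n) := by
    ext u
    simp only [Set.mem_image, Set.mem_setOf_eq, Finset.coe_sort_coe, Finset.mem_coe,
      BinaryTree.mem_treesOfNumNodesEq]
    constructor
    · rintro ⟨t, ⟨hl, hnorm⟩, rfl⟩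
      exact (PBTree.numNodes_toTree t hnorm).trans hl
    · rintro hu
      have hne : u ≠ .nil := by
        rintro rfl
        simp [Tree.numNodes] at hu
        omega
      obtain ⟨h1, h2, h3⟩ := PBTree.ofTree_spec u hne
      exact ⟨PBTree.ofTree u, ⟨by rw [h3]; exact hu, h1⟩, h2⟩
  have hinj : Set.InjOn PBTree.toTree {t : PBTree DendOp | t.leaves = n ∧ t.normalCW} := by
    intro s hs t ht h
    rw [← PBTree.ofTree_toTree s hs.2, ← PBTree.ofTree_toTree t ht.2, h]
  calc {t : PBTree DendOp | t.leaves = n ∧ t.normalCW}.ncard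
      = (PBTree.toTree '' {t : PBTree DendOp | t.leaves = n ∧ t.normalCW}).ncard :=
        (Set.ncard_image_of_injOn hinj).symm
    _ = (↑(Tree.treesOfNumNodesEq n) : Set (Tree Unit)).ncard := by rw [himg]
    _ = (Tree.treesOfNumNodesEq n).card := Set.ncard_coe_finset _
    _ = catalan n := BinaryTree.treesOfNumNodesEq_card_eq_catalan n
    _ = (2 * n).choose n / (n + 1) := by
        rw [catalan_eq_centralBinom_div, Nat.centralBinom]
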